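/- Let p be a subcritical offspring distribution (μ(p)<1) satisfying p(0)>0 and p(0)+p(1)<1, and let A ⊆ ℕ with p(A)>0. If 0 ∉ A and q = min I_A, then c_A(q)=0, E[q^X 1_{X∈A^c}] = q, and lim_{θ↓q} μ(p_{A,θ}) = E[X q^{X−1} 1_{X∈A^c}] < 1. -/

import Mathlib

open scoped Classical

/-- The normalizing constant `c_A(θ)`. -/
noncomputable def cA (p : ℕ → ℝ) (A : Set ℕ) (θ : ℝ) : ℝ :=
  (θ - ∑' k : ℕ, (Aᶜ).indicator (fun k => θ ^ k * p k) k) /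
    (θ * ∑' k : ℕ, A.indicator (fun k => θ ^ k * p k) k)

/-- The modified offspring distribution `p_{A,θ}`. -/
noncomputable def pMod (p : ℕ → ℝ) (A : Set ℕ) (θ : ℝ) : ℕ → ℝ :=
  fun k => if k ∈ A then cA p A θ * θ ^ k * p k else θ ^ ((k : ℤ) - 1) * p k

/-- `I_A`: the set of `θ > 0` for which `p_{A,θ}` is a probability distribution. -/
def IA (p : ℕ → ℝ) (A : Set ℕ) : Set ℝ :=
  {θ | 0 < θ ∧ (∀ k, 0 ≤ pMod p A θ k) ∧ ∑' k, pMod p A θ k = 1}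

open Filter in
private lemma aux_tendsto (p : ℕ → ℝ) (hp : ∀ k, 0 ≤ p k) (hsp : Summable p)
    (S : Set ℕ) {t : ℝ} {l : Filter ℝ} (hl : l ≤ nhds t)
    (hl' : ∀ᶠ θ in l, θ ∈ Set.Icc (0:ℝ) 1) :
    Tendsto (fun θ : ℝ => ∑' k : ℕ, S.indicator (fun k => θ ^ k * p k) k) l
      (nhds (∑' k : ℕ, S.indicator (fun k => t ^ k * p k) k)) := by
  apply tendsto_tsum_of_dominated_convergence hsp
  · intro k
    by_cases hk : k ∈ S
    · simp only [Set.indicator_of_mem hk]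
      exact (((continuous_pow k).mul continuous_const).tendsto t).mono_left hl
    · simp only [Set.indicator_of_notMem hk]
      exact tendsto_const_nhds
  · filter_upwards [hl'] with θ hθ k
    by_cases hk : k ∈ S
    · simp only [Set.indicator_of_mem hk, Real.norm_eq_abs,
        abs_of_nonneg (mul_nonneg (pow_nonneg hθ.1 k) (hp k))]
      calc θ ^ k * p k ≤ 1 * p k :=
            mul_le_mul_of_nonneg_right (pow_le_one₀ hθ.1 hθ.2) (hp k)
        _ = p k := one_mul _
    · simp [Set.indicator_of_notMem hk, hp k]

set_option maxHeartbeats 1000000 in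
open Filter in
theorem stmt4 (p : ℕ → ℝ) (A : Set ℕ) (q : ℝ)
    (hp : ∀ k, 0 ≤ p k) (hpsum : ∑' k, p k = 1)
    (hp0 : 0 < p 0) (hp01 : p 0 + p 1 < 1)
    (hmean : Summable (fun k : ℕ => (k : ℝ) * p k))
    (hsub : ∑' k : ℕ, (k : ℝ) * p k < 1)
    (h0A : 0 ∉ A) (hApos : 0 < ∑' k : ℕ, A.indicator p k)
    (hq : IsLeast (IA p A) q) :
    cA p A q = 0
    ∧ (∑' k : ℕ, (Aᶜ).indicator (fun k => q ^ k * p k) k) = q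
    ∧ Tendsto (fun θ : ℝ => ∑' k : ℕ, (k : ℝ) * pMod p A θ k)
        (nhdsWithin q (Set.Ioi q))
        (nhds (∑' k : ℕ, (Aᶜ).indicator (fun k => (k : ℝ) * q ^ ((k : ℤ) - 1) * p k) k))
    ∧ (∑' k : ℕ, (Aᶜ).indicator (fun k => (k : ℝ) * q ^ ((k : ℤ) - 1) * p k) k) < 1 := by
  classical
  have hsp : Summable p := by
    by_contra h
    rw [tsum_eq_zero_of_not_summable h] at hpsum
    norm_num at hpsum
  have hple1 : ∀ k, p k ≤ 1 := by
    intro k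
    rw [← hpsum]
    exact hsp.le_tsum k fun j _ => hp j
  obtain ⟨k₀, hk₀A, hk₀p⟩ : ∃ k₀, k₀ ∈ A ∧ 0 < p k₀ := by
    by_contra h
    push_neg at h
    have hz : ∀ k, A.indicator p k = 0 := by
      intro k
      by_cases hk : k ∈ A
      · simp [Set.indicator_of_mem hk, le_antisymm (h k hk) (hp k)]
      · simp [Set.indicator_of_notMem hk]
    rw [tsum_congr hz, tsum_zero] at hApos
    exact lt_irrefl 0 hApos
  have hsum01 : ∀ (θ : ℝ), 0 ≤ θ → θ ≤ 1 → ∀ S : Set ℕ,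
      Summable (S.indicator (fun k => θ ^ k * p k)) := by
    intro θ h0 h1 S
    apply Summable.indicator
    refine Summable.of_nonneg_of_le (fun k => mul_nonneg (pow_nonneg h0 k) (hp k))
      (fun k => ?_) hsp
    calc θ ^ k * p k ≤ 1 * p k := mul_le_mul_of_nonneg_right (pow_le_one₀ h0 h1) (hp k)
      _ = p k := one_mul _
  have hindnn : ∀ (S : Set ℕ) (θ : ℝ), 0 ≤ θ → ∀ k,
      0 ≤ S.indicator (fun k => θ ^ k * p k) k :=
    fun S θ h0 k => Set.indicator_nonneg (fun j _ => mul_nonneg (pow_nonneg h0 j) (hp j)) k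
  have hSApos : ∀ θ : ℝ, 0 < θ → θ ≤ 1 →
      0 < ∑' k : ℕ, A.indicator (fun k => θ ^ k * p k) k := by
    intro θ h0 h1
    refine Summable.tsum_pos (hsum01 θ h0.le h1 A) (hindnn A θ h0.le) k₀ ?_
    rw [Set.indicator_of_mem hk₀A]
    positivity
  have hmem : ∀ θ : ℝ, 0 < θ → θ ≤ 1 →
      (∑' k : ℕ, (Aᶜ).indicator (fun k => θ ^ k * p k) k) ≤ θ → θ ∈ IA p A := by
    intro θ h0 h1 hfθ
    have hSA := hSApos θ h0 h1
    have hcA : 0 ≤ cA p A θ :=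
      div_nonneg (by linarith) (mul_nonneg h0.le hSA.le)
    refine ⟨h0, fun k => ?_, ?_⟩
    · unfold pMod
      split
      · exact mul_nonneg (mul_nonneg hcA (pow_nonneg h0.le k)) (hp k)
      · exact mul_nonneg (zpow_nonneg h0.le _) (hp k)
    · have h1' : pMod p A θ = fun k =>
          cA p A θ * A.indicator (fun k => θ ^ k * p k) k
          + θ⁻¹ * (Aᶜ).indicator (fun k => θ ^ k * p k) k := by
        funext k
        unfold pMod
        by_cases hk : k ∈ A
        · rw [if_pos hk, Set.indicator_of_mem hk,
            Set.indicator_of_notMem (by simpa using hk)]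
          ring
        · rw [if_neg hk, Set.indicator_of_notMem hk,
            Set.indicator_of_mem (Set.mem_compl hk),
            zpow_sub_one₀ (ne_of_gt h0), zpow_natCast]
          ring
      rw [h1', Summable.tsum_add ((hsum01 θ h0.le h1 A).mul_left _) ((hsum01 θ h0.le h1 Aᶜ).mul_left _),
        tsum_mul_left, tsum_mul_left]
      unfold cA
      field_simp
      ring
  have hSC1 : (∑' k : ℕ, (Aᶜ).indicator (fun k => (1:ℝ) ^ k * p k) k)
      = ∑' k : ℕ, (Aᶜ).indicator p k := by
    apply tsum_congr
    intro k
    simp [one_pow]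
  have hsplit : (∑' k : ℕ, A.indicator p k) + (∑' k : ℕ, (Aᶜ).indicator p k) = 1 := by
    rw [← Summable.tsum_add (hsp.indicator A) (hsp.indicator Aᶜ), ← hpsum]
    apply tsum_congr
    intro k
    exact congrFun (Set.indicator_self_add_compl A p) k
  have hAcle : (∑' k : ℕ, (Aᶜ).indicator p k) = 1 - ∑' k : ℕ, A.indicator p k := by
    linarith
  have h1mem : (1:ℝ) ∈ IA p A := by
    apply hmem 1 one_pos le_rfl
    rw [hSC1, hAcle]
    linarith
  obtain ⟨⟨hq0, hqnn, hqsum⟩, hqlb⟩ := hq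
  have hq1 : q ≤ 1 := hqlb h1mem
  have hSAq := hSApos q hq0 hq1
  have hfq_le : (∑' k : ℕ, (Aᶜ).indicator (fun k => q ^ k * p k) k) ≤ q := by
    have h := hqnn k₀
    unfold pMod at h
    rw [if_pos hk₀A] at h
    have hcA : 0 ≤ cA p A q := by
      by_contra hneg
      push_neg at hneg
      nlinarith [mul_pos (pow_pos hq0 k₀) hk₀p]
    unfold cA at hcA
    rcases div_nonneg_iff.mp hcA with ⟨h1, _⟩ | ⟨_, h2⟩
    · linarith
    · nlinarith
  have hbelow : ∀ t : ℝ, 0 < t → t ≤ 1 →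
      (∑' k : ℕ, (Aᶜ).indicator (fun k => t ^ k * p k) k) < t →
      ∃ θ, θ < t ∧ θ ∈ IA p A := by
    intro t ht0 ht1 hlt
    have hne : (nhdsWithin t (Set.Iio t)).NeBot := nhdsWithin_Iio_self_neBot' ⟨0, ht0⟩
    have hev : ∀ᶠ θ in nhdsWithin t (Set.Iio t), 0 < θ :=
      Filter.Eventually.filter_mono nhdsWithin_le_nhds (eventually_gt_nhds ht0)
    have hev2 : ∀ᶠ θ in nhdsWithin t (Set.Iio t), θ < t := eventually_mem_nhdsWithin
    have hicc : ∀ᶠ θ in nhdsWithin t (Set.Iio t), θ ∈ Set.Icc (0:ℝ) 1 := by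
      filter_upwards [hev, hev2] with θ h1 h2
      exact ⟨h1.le, le_trans h2.le ht1⟩
    have ht' := aux_tendsto p hp hsp Aᶜ nhdsWithin_le_nhds hicc
    have hsub' := ht'.sub (tendsto_id.mono_left nhdsWithin_le_nhds)
    have hevlt : ∀ᶠ θ in nhdsWithin t (Set.Iio t),
        (∑' k : ℕ, (Aᶜ).indicator (fun k => θ ^ k * p k) k) - θ < 0 :=
      hsub'.eventually_lt_const (by linarith)
    obtain ⟨θ, hθ1, hθ2, hθ3⟩ := (hevlt.and (hev.and hev2)).exists
    exact ⟨θ, hθ3, hmem θ hθ2 (le_trans hθ3.le ht1) (by linarith)⟩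
  have hqlt1 : q < 1 := by
    rcases lt_or_eq_of_le hq1 with h | h
    · exact h
    exfalso
    have hlt : (∑' k : ℕ, (Aᶜ).indicator (fun k => (1:ℝ) ^ k * p k) k) < 1 := by
      rw [hSC1, hAcle]; linarith
    obtain ⟨θ, hθlt, hθmem⟩ := hbelow 1 one_pos le_rfl hlt
    have := hqlb hθmem
    rw [h] at this
    linarith
  have hfq : (∑' k : ℕ, (Aᶜ).indicator (fun k => q ^ k * p k) k) = q := by
    rcases lt_or_eq_of_le hfq_le with h | h
    · exfalso
      obtain ⟨θ, hθlt, hθmem⟩ := hbelow q hq0 hq1 h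
      exact absurd (hqlb hθmem) (not_le.mpr hθlt)
    · exact h
  have hcAq : cA p A q = 0 := by
    unfold cA
    rw [hfq]
    simp
  refine ⟨hcAq, hfq, ?_, ?_⟩
  · -- part 3
    have hrq : q < (1 + q) / 2 := by linarith
    have hr1 : (1 + q) / 2 < 1 := by linarith
    set r : ℝ := (1 + q) / 2 with hrdef
    have hr0 : (0:ℝ) < r := by rw [hrdef]; linarith
    have hsum_kr : Summable (fun k : ℕ => (k : ℝ) * r ^ k) := by
      simpa [pow_one] using summable_pow_mul_geometric_of_norm_lt_one (R := ℝ) 1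
        (by rw [Real.norm_eq_abs, abs_of_nonneg hr0.le]; exact hr1)
    have hioo : ∀ᶠ θ in nhdsWithin q (Set.Ioi q), θ ∈ Set.Ioo q r :=
      Ioo_mem_nhdsGT hrq
    have hicc : ∀ᶠ θ in nhdsWithin q (Set.Ioi q), θ ∈ Set.Icc (0:ℝ) 1 := by
      filter_upwards [hioo] with θ hθ
      exact ⟨le_trans hq0.le hθ.1.le, le_trans hθ.2.le hr1.le⟩
    have htSC := aux_tendsto p hp hsp Aᶜ nhdsWithin_le_nhds hicc
    have htSA := aux_tendsto p hp hsp A nhdsWithin_le_nhds hicc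
    have htid : Tendsto (fun θ : ℝ => θ) (nhdsWithin q (Set.Ioi q)) (nhds q) :=
      tendsto_id.mono_left nhdsWithin_le_nhds
    have hden : q * (∑' k : ℕ, A.indicator (fun k => q ^ k * p k) k) ≠ 0 :=
      ne_of_gt (mul_pos hq0 hSAq)
    have htcA : Tendsto (fun θ => cA p A θ) (nhdsWithin q (Set.Ioi q)) (nhds 0) := by
      have h := (htid.sub htSC).div (htid.mul htSA) hden
      rw [hfq, sub_self, zero_div] at h
      exact h
    have hevcA : ∀ᶠ θ in nhdsWithin q (Set.Ioi q), |cA p A θ| ≤ 1 := by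
      have h2 : ∀ᶠ θ in nhdsWithin q (Set.Ioi q), cA p A θ ∈ Set.Ioo (-1:ℝ) 1 :=
        htcA.eventually (Ioo_mem_nhds (by norm_num) (by norm_num))
      filter_upwards [h2] with θ hθ
      exact abs_le.mpr ⟨hθ.1.le, hθ.2.le⟩
    refine tendsto_tsum_of_dominated_convergence
      (f := fun (θ : ℝ) (k : ℕ) => (k : ℝ) * pMod p A θ k)
      (bound := fun k => (1 + q⁻¹) * ((k : ℝ) * r ^ k)) (hsum_kr.mul_left _) ?_ ?_
    · intro k
      by_cases hk : k ∈ A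
      · have hg0 : (Aᶜ).indicator (fun k => (k : ℝ) * q ^ ((k : ℤ) - 1) * p k) k = 0 :=
          Set.indicator_of_notMem (by simpa using hk) _
        rw [hg0]
        have heq : (fun θ : ℝ => (k : ℝ) * pMod p A θ k)
            = fun θ => (k : ℝ) * (cA p A θ * θ ^ k * p k) := by
          funext θ; unfold pMod; rw [if_pos hk]
        rw [heq]
        have hpow : Tendsto (fun θ : ℝ => θ ^ k) (nhdsWithin q (Set.Ioi q)) (nhds (q ^ k)) :=
          ((continuous_pow k).tendsto q).mono_left nhdsWithin_le_nhds
        have h := (tendsto_const_nhds (x := (k:ℝ))).mul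
          (((htcA.mul hpow).mul (tendsto_const_nhds (x := p k))))
        simpa using h
      · have heq : (fun θ : ℝ => (k : ℝ) * pMod p A θ k)
            = fun θ => (k : ℝ) * (θ ^ ((k : ℤ) - 1) * p k) := by
          funext θ; unfold pMod; rw [if_neg hk]
        rw [heq, Set.indicator_of_mem (Set.mem_compl hk)]
        have hz : Tendsto (fun θ : ℝ => θ ^ ((k : ℤ) - 1)) (nhdsWithin q (Set.Ioi q))
            (nhds (q ^ ((k : ℤ) - 1))) :=
          ((continuousAt_zpow₀ q _ (Or.inl (ne_of_gt hq0))).tendsto).mono_left nhdsWithin_le_nhds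
        have h := (tendsto_const_nhds (x := (k:ℝ))).mul (hz.mul (tendsto_const_nhds (x := p k)))
        simpa [mul_assoc] using h
    · filter_upwards [hioo, hevcA] with θ hθ hca k
      have hθ0 : 0 < θ := lt_trans hq0 hθ.1
      have hθr : θ ≤ r := hθ.2.le
      have hθk : θ ^ k ≤ r ^ k := pow_le_pow_left₀ hθ0.le hθr k
      have hkr : (0:ℝ) ≤ (k : ℝ) * r ^ k :=
        mul_nonneg (Nat.cast_nonneg k) (pow_nonneg hr0.le k)
      have hqi : (0:ℝ) ≤ q⁻¹ := inv_nonneg.mpr hq0.le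
      unfold pMod
      by_cases hk : k ∈ A
      · rw [if_pos hk, Real.norm_eq_abs]
        have habs : |(k : ℝ) * (cA p A θ * θ ^ k * p k)|
            = (k : ℝ) * (|cA p A θ| * θ ^ k * p k) := by
          rw [abs_mul, abs_mul, abs_mul, Nat.abs_cast,
            abs_of_nonneg (pow_nonneg hθ0.le k), abs_of_nonneg (hp k)]
        rw [habs]
        have h1 : |cA p A θ| * θ ^ k ≤ 1 * r ^ k :=
          mul_le_mul hca hθk (pow_nonneg hθ0.le k) zero_le_one
        calc (k : ℝ) * (|cA p A θ| * θ ^ k * p k)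
            ≤ (k : ℝ) * (1 * r ^ k * 1) := by
              apply mul_le_mul_of_nonneg_left _ (Nat.cast_nonneg k)
              exact mul_le_mul h1 (hple1 k) (hp k) (by positivity)
          _ = (k : ℝ) * r ^ k := by ring
          _ ≤ (1 + q⁻¹) * ((k : ℝ) * r ^ k) := by nlinarith
      · rw [if_neg hk, Real.norm_eq_abs, zpow_sub_one₀ (ne_of_gt hθ0), zpow_natCast,
          abs_of_nonneg (mul_nonneg (Nat.cast_nonneg k)
            (mul_nonneg (mul_nonneg (pow_nonneg hθ0.le k) (inv_nonneg.mpr hθ0.le)) (hp k)))]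
        have hinv : θ⁻¹ ≤ q⁻¹ := inv_anti₀ hq0 hθ.1.le
        have h1 : θ ^ k * θ⁻¹ ≤ r ^ k * q⁻¹ :=
          mul_le_mul hθk hinv (inv_nonneg.mpr hθ0.le) (pow_nonneg hr0.le k)
        calc (k : ℝ) * (θ ^ k * θ⁻¹ * p k)
            ≤ (k : ℝ) * (r ^ k * q⁻¹ * 1) := by
              apply mul_le_mul_of_nonneg_left _ (Nat.cast_nonneg k)
              exact mul_le_mul h1 (hple1 k) (hp k) (by positivity)
          _ = q⁻¹ * ((k : ℝ) * r ^ k) := by ring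
          _ ≤ (1 + q⁻¹) * ((k : ℝ) * r ^ k) := by nlinarith
  · -- part 4
    have h1q : (0:ℝ) < 1 - q := by linarith
    have hqnorm : ‖q‖ < 1 := by rw [Real.norm_eq_abs, abs_of_nonneg hq0.le]; exact hqlt1
    have hsum_kq : Summable (fun k : ℕ => (k : ℝ) * q ^ k) := by
      simpa [pow_one] using summable_pow_mul_geometric_of_norm_lt_one (R := ℝ) 1 hqnorm
    have hsumL : Summable (fun k : ℕ =>
        (Aᶜ).indicator (fun k => (k : ℝ) * q ^ ((k : ℤ) - 1) * p k) k) := by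
      apply Summable.indicator
      refine Summable.of_nonneg_of_le
        (fun k => mul_nonneg (mul_nonneg (Nat.cast_nonneg k) (zpow_nonneg hq0.le _)) (hp k))
        (fun k => ?_) (hsum_kq.mul_left q⁻¹)
      rw [zpow_sub_one₀ (ne_of_gt hq0), zpow_natCast]
      have h1 : (0:ℝ) ≤ (k:ℝ) * q ^ k * q⁻¹ :=
        mul_nonneg (mul_nonneg (Nat.cast_nonneg k) (pow_nonneg hq0.le k)) (inv_nonneg.mpr hq0.le)
      nlinarith [hple1 k, hp k]
    have hsumR : Summable (fun k : ℕ =>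
        (1 - q)⁻¹ * (Aᶜ).indicator (fun k => (1 - q ^ k) * p k) k) := by
      apply Summable.mul_left
      apply Summable.indicator
      refine Summable.of_nonneg_of_le
        (fun k => mul_nonneg (by nlinarith [pow_le_one₀ hq0.le hqlt1.le (n := k)]) (hp k))
        (fun k => ?_) hsp
      nlinarith [hp k, pow_nonneg hq0.le k]
    have hterm : ∀ k, (Aᶜ).indicator (fun k => (k : ℝ) * q ^ ((k : ℤ) - 1) * p k) k
        ≤ (1 - q)⁻¹ * (Aᶜ).indicator (fun k => (1 - q ^ k) * p k) k := by
      intro k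
      by_cases hk : k ∈ Aᶜ
      · rw [Set.indicator_of_mem hk, Set.indicator_of_mem hk]
        cases k with
        | zero => simp
        | succ n =>
          have hz : ((n + 1 : ℕ) : ℤ) - 1 = (n : ℤ) := by push_cast; ring
          rw [hz, zpow_natCast]
          have hgeom := geom_sum_mul q (n + 1)
          have hS : ((n + 1 : ℕ) : ℝ) * q ^ n ≤ ∑ j ∈ Finset.range (n + 1), q ^ j := by
            have hle : ∀ j ∈ Finset.range (n + 1), q ^ n ≤ q ^ j := fun j hj =>
              pow_le_pow_of_le_one hq0.le hqlt1.le (Nat.le_of_lt_succ (Finset.mem_range.mp hj))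
            calc ((n + 1 : ℕ) : ℝ) * q ^ n = ∑ _j ∈ Finset.range (n + 1), q ^ n := by
                  rw [Finset.sum_const, Finset.card_range, nsmul_eq_mul]
              _ ≤ _ := Finset.sum_le_sum hle
          have hkey : ((n + 1 : ℕ) : ℝ) * q ^ n ≤ (1 - q ^ (n + 1)) / (1 - q) := by
            rw [le_div_iff₀ h1q]
            nlinarith [hS]
          calc ((n + 1 : ℕ) : ℝ) * q ^ n * p (n + 1)
              ≤ (1 - q ^ (n + 1)) / (1 - q) * p (n + 1) :=
                mul_le_mul_of_nonneg_right hkey (hp _)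
            _ = (1 - q)⁻¹ * ((1 - q ^ (n + 1)) * p (n + 1)) := by ring
      · rw [Set.indicator_of_notMem hk, Set.indicator_of_notMem hk]
        simp
    calc (∑' k : ℕ, (Aᶜ).indicator (fun k => (k : ℝ) * q ^ ((k : ℤ) - 1) * p k) k)
        ≤ ∑' k : ℕ, (1 - q)⁻¹ * (Aᶜ).indicator (fun k => (1 - q ^ k) * p k) k :=
          Summable.tsum_le_tsum hterm hsumL hsumR
      _ = (1 - q)⁻¹ * ∑' k : ℕ, (Aᶜ).indicator (fun k => (1 - q ^ k) * p k) k := tsum_mul_left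
      _ = (1 - q)⁻¹ * ((1 - ∑' k : ℕ, A.indicator p k) - q) := by
          congr 1
          have heq : (fun k : ℕ => (Aᶜ).indicator (fun k => (1 - q ^ k) * p k) k)
              = fun k => (Aᶜ).indicator p k - (Aᶜ).indicator (fun k => q ^ k * p k) k := by
            funext k
            by_cases hk : k ∈ Aᶜ
            · rw [Set.indicator_of_mem hk, Set.indicator_of_mem hk, Set.indicator_of_mem hk]
              ring
            · rw [Set.indicator_of_notMem hk, Set.indicator_of_notMem hk,
                Set.indicator_of_notMem hk]
              ring
          rw [heq, Summable.tsum_sub (hsp.indicator _) (hsum01 q hq0.le hq1 Aᶜ), hAcle, hfq]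
      _ < 1 := by
          rw [inv_mul_lt_iff₀ h1q]
          linarith
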